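/- Let p be an odd prime with K(m) ≢ 0 (mod p) for all m ≥ p. Then the number of positive integers n with p | K(n) is at most ⌊(p-1)/4⌋. -/

import Mathlib

/-- Kurepa's left factorial. -/
def K (n : ℕ) : ℕ := ∑ k ∈ Finset.range n, k.factorial

theorem kurepa_index_bound (p : ℕ) (hp : p.Prime) (hodd : Odd p)
    (h : ∀ m, p ≤ m → ¬ p ∣ K m) :
    {n : ℕ | 0 < n ∧ p ∣ K n}.ncard ≤ (p - 1) / 4 := by
  set S : Set ℕ := {n : ℕ | 0 < n ∧ p ∣ K n} with hSdef
  have hp2 : p ≠ 2 := by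
    rintro rfl
    exact ((Nat.not_odd_iff_even.mpr even_two)) hodd
  have hp3 : 3 ≤ p := by
    rcases hp.two_le.lt_or_eq with h' | h'
    · omega
    · omega
  have hlt : ∀ n ∈ S, n < p := by
    intro n hn
    by_contra hle
    exact h n (le_of_not_gt hle) hn.2
  have h4 : ∀ n ∈ S, 4 ≤ n := by
    intro n hn
    by_contra hle
    push_neg at hle
    interval_cases n
    · exact absurd hn.1 (lt_irrefl 0)
    · have : p ∣ 1 := by simpa [K, Finset.sum_range_succ] using hn.2
      have := Nat.le_of_dvd one_pos this
      omega
    · have : p ∣ 2 := by simpa [K, Finset.sum_range_succ] using hn.2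
      exact hp2 ((Nat.prime_dvd_prime_iff_eq hp Nat.prime_two).mp this)
    · have h4' : p ∣ 4 := by simpa [K, Finset.sum_range_succ] using hn.2
      have h4'' : p ∣ 2 ^ 2 := by norm_num at h4' ⊢; exact h4'
      have : p ∣ 2 := hp.dvd_of_dvd_pow h4''
      exact hp2 ((Nat.prime_dvd_prime_iff_eq hp Nat.prime_two).mp this)
  have hgap : ∀ m ∈ S, ∀ n ∈ S, m < n → m + 4 ≤ n := by
    intro m hm n hn hmn
    by_contra hle
    push_neg at hle
    have hmp : m < p := hlt m hm
    have hnp : n < p := hlt n hn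
    have hKm : p ∣ K m := hm.2
    have hKn : p ∣ K n := hn.2
    have hfact : ¬ p ∣ m.factorial := by
      rw [Nat.Prime.dvd_factorial hp]
      omega
    have hcases : n = m + 1 ∨ n = m + 2 ∨ n = m + 3 := by omega
    rcases hcases with rfl | rfl | rfl
    · -- n = m + 1
      have : K (m + 1) = K m + m.factorial := by
        simp [K, Finset.sum_range_succ]
      rw [this] at hKn
      exact hfact ((Nat.dvd_add_right hKm).mp hKn)
    · -- n = m + 2
      have : K (m + 2) = K m + m.factorial * (m + 2) := by
        simp [K, Finset.sum_range_succ, Nat.factorial_succ]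
        ring
      rw [this] at hKn
      have := (Nat.dvd_add_right hKm).mp hKn
      rcases (hp.dvd_mul).mp this with h' | h'
      · exact hfact h'
      · have := Nat.le_of_dvd (by omega) h'
        omega
    · -- n = m + 3
      have : K (m + 3) = K m + m.factorial * ((m + 2) * (m + 2)) := by
        simp [K, Finset.sum_range_succ, Nat.factorial_succ]
        ring
      rw [this] at hKn
      have := (Nat.dvd_add_right hKm).mp hKn
      rcases (hp.dvd_mul).mp this with h' | h'
      · exact hfact h'
      · rcases (hp.dvd_mul).mp h' with h'' | h'' <;>
        · have := Nat.le_of_dvd (by omega) h''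
          omega
  have hinj : Set.InjOn (fun n => n / 4) S := by
    intro a ha b hb hab
    simp only at hab
    by_contra hne
    rcases Nat.lt_or_ge a b with h' | h'
    · have := hgap a ha b hb h'
      omega
    · have h'' : b < a := lt_of_le_of_ne h' (Ne.symm hne)
      have := hgap b hb a ha h''
      omega
  have himg : (fun n => n / 4) '' S ⊆ Set.Icc 1 ((p - 1) / 4) := by
    rintro _ ⟨n, hn, rfl⟩
    have h1 := h4 n hn
    have h2 := hlt n hn
    refine ⟨(Nat.one_le_div_iff (by norm_num)).mpr h1, Nat.div_le_div_right (by omega)⟩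
  calc S.ncard = ((fun n => n / 4) '' S).ncard := (Set.ncard_image_of_injOn hinj).symm
    _ ≤ (Set.Icc 1 ((p - 1) / 4)).ncard :=
        Set.ncard_le_ncard himg (Set.finite_Icc _ _)
    _ = (p - 1) / 4 := by
        rw [← Finset.coe_Icc, Set.ncard_coe_finset, Nat.card_Icc]
        omega
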